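/- Thomson's principle: in a finite connected network G with distinct vertices a,z, the effective resistance R_eff(a↔z;G) equals the infimum of the energy E(θ) over all unit-strength flows θ from a to z, and this infimum is attained by the unit current flow. -/

import Mathlib

open Finset

section
variable {V : Type*} [Fintype V]

lemma thomson_anti_total (η : V → V → ℝ) (hη : ∀ x y, η x y = - η y x) :
    ∑ x : V, ∑ y : V, η x y = 0 := by
  have h1 : ∑ x : V, ∑ y : V, η x y = ∑ x : V, ∑ y : V, η y x := Finset.sum_comm
  have h2 : ∑ x : V, ∑ y : V, (η x y + η y x) = 0 :=
    Finset.sum_eq_zero fun x _ => Finset.sum_eq_zero fun y _ => by rw [hη x y]; ring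
  simp only [Finset.sum_add_distrib] at h2
  linarith

lemma thomson_pairing (η : V → V → ℝ) (h : V → ℝ) (hη : ∀ x y, η x y = - η y x) :
    ∑ x : V, ∑ y : V, η x y * (h y - h x) = -2 * ∑ x : V, h x * ∑ y : V, η x y := by
  have hA : ∑ x : V, ∑ y : V, η x y * h y = - ∑ x : V, h x * ∑ y : V, η x y := by
    calc ∑ x : V, ∑ y : V, η x y * h y
        = ∑ y : V, ∑ x : V, η x y * h y := Finset.sum_comm
      _ = ∑ y : V, -(h y * ∑ x : V, η y x) := by
          refine Finset.sum_congr rfl fun y _ => ?_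
          rw [Finset.mul_sum, ← Finset.sum_neg_distrib]
          exact Finset.sum_congr rfl fun x _ => by rw [hη x y]; ring
      _ = - ∑ y : V, h y * ∑ x : V, η y x := by rw [Finset.sum_neg_distrib]
  have hB : ∑ x : V, ∑ y : V, η x y * h x = ∑ x : V, h x * ∑ y : V, η x y := by
    refine Finset.sum_congr rfl fun x _ => ?_
    rw [Finset.mul_sum]
    exact Finset.sum_congr rfl fun y _ => by ring
  have hsplit : ∑ x : V, ∑ y : V, η x y * (h y - h x)
      = (∑ x : V, ∑ y : V, η x y * h y) - ∑ x : V, ∑ y : V, η x y * h x := by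
    rw [← Finset.sum_sub_distrib]
    refine Finset.sum_congr rfl fun x _ => ?_
    rw [← Finset.sum_sub_distrib]
    exact Finset.sum_congr rfl fun y _ => by ring
  rw [hsplit, hA, hB]; ring

lemma thomson_sum_two (f : V → ℝ) (a z : V) (haz : a ≠ z)
    (h0 : ∀ x, x ≠ a → x ≠ z → f x = 0) :
    ∑ x : V, f x = f a + f z := by
  classical
  rw [← Finset.sum_subset (Finset.subset_univ ({a, z} : Finset V))]
  · rw [Finset.sum_pair haz]
  · intro x _ hx
    simp only [Finset.mem_insert, Finset.mem_singleton] at hx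
    push_neg at hx
    exact h0 x hx.1 hx.2

lemma thomson_div_z (θ : V → V → ℝ) (hθ : ∀ x y, θ x y = - θ y x) (a z : V) (haz : a ≠ z)
    (hdiv : ∀ x, x ≠ a → x ≠ z → ∑ y : V, θ x y = 0) :
    ∑ y : V, θ z y = - ∑ y : V, θ a y := by
  have h := thomson_anti_total θ hθ
  have h2 := thomson_sum_two (fun x => ∑ y : V, θ x y) a z haz hdiv
  rw [h2] at h
  linarith

end


/-- Thomson's principle: in a finite connected network with distinct vertices
`a, z`, the effective resistance `(h₀ z - h₀ a)/‖c d h₀‖` (computed from any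
nonconstant voltage `h₀`) is the least element of the set of energies of
unit-strength flows from `a` to `z`; in particular the infimum is attained. -/
theorem stmt_7 {V : Type*} [Fintype V]
    (c : V → V → ℝ) (hsym : ∀ x y, c x y = c y x) (hnn : ∀ x y, 0 ≤ c x y)
    (hconn : ∀ x y : V, Relation.ReflTransGen (fun u v => 0 < c u v) x y)
    (a z : V) (haz : a ≠ z)
    (h₀ : V → ℝ)
    (hharm : ∀ x, x ≠ a → x ≠ z → ∑ y, c x y * (h₀ y - h₀ x) = 0)
    (hnc : ∃ u v, h₀ u ≠ h₀ v) :
    IsLeast {q : ℝ | ∃ θ : V → V → ℝ, (∀ x y, θ x y = - θ y x) ∧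
        (∀ x y, c x y = 0 → θ x y = 0) ∧
        (∀ x, x ≠ a → x ≠ z → ∑ y, θ x y = 0) ∧
        (∑ y, θ a y = 1) ∧
        q = (1/2) * ∑ x, ∑ y, (1 / c x y) * θ x y ^ 2}
      ((h₀ z - h₀ a) / (∑ y, c a y * (h₀ y - h₀ a))) := by
  classical
  set i : V → V → ℝ := fun x y => c x y * (h₀ y - h₀ x) with hi_def
  set S : ℝ := ∑ y, c a y * (h₀ y - h₀ a) with hS_def
  have hSa : ∑ y : V, i a y = S := rfl
  have hi_anti : ∀ x y, i x y = - i y x := by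
    intro x y; simp only [hi_def]; rw [hsym]; ring
  have hdiv_i : ∀ x, x ≠ a → x ≠ z → ∑ y : V, i x y = 0 := hharm
  have hSz : ∑ y : V, i z y = - S := by
    rw [← hSa]; exact thomson_div_z i hi_anti a z haz hdiv_i
  -- S ≠ 0
  have hS0 : S ≠ 0 := by
    intro h0S
    have hall : ∀ x, ∑ y : V, i x y = 0 := by
      intro x
      by_cases hxa : x = a
      · rw [hxa, hSa]; exact h0S
      by_cases hxz : x = z
      · rw [hxz, hSz, h0S, neg_zero]
      exact hdiv_i x hxa hxz
    have hp := thomson_pairing i h₀ hi_anti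
    simp only [hall, mul_zero, Finset.sum_const_zero] at hp
    -- hp : ∑ x, ∑ y, i x y * (h₀ y - h₀ x) = -2 * 0 = 0
    have hpt : ∀ x ∈ (Finset.univ : Finset V), ∀ y ∈ (Finset.univ : Finset V),
        (0:ℝ) ≤ c x y * (h₀ y - h₀ x)^2 :=
      fun x _ y _ => mul_nonneg (hnn x y) (sq_nonneg _)
    have hp2 : ∑ x : V, ∑ y : V, c x y * (h₀ y - h₀ x)^2 = 0 := by
      rw [← hp]
      refine Finset.sum_congr rfl fun x _ => Finset.sum_congr rfl fun y _ => ?_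
      simp only [hi_def]; ring
    have heach : ∀ x y : V, c x y * (h₀ y - h₀ x)^2 = 0 := by
      intro x y
      have h1 := (Finset.sum_eq_zero_iff_of_nonneg
        (fun x _ => Finset.sum_nonneg (hpt x (Finset.mem_univ x)))).mp hp2 x (Finset.mem_univ x)
      exact (Finset.sum_eq_zero_iff_of_nonneg (hpt x (Finset.mem_univ x))).mp h1 y
        (Finset.mem_univ y)
    have heq : ∀ x y : V, 0 < c x y → h₀ x = h₀ y := by
      intro x y hc
      have := heach x y
      have h2 : (h₀ y - h₀ x)^2 = 0 := by
        rcases mul_eq_zero.mp this with h | h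
        · exact absurd h (ne_of_gt hc)
        · exact h
      have := pow_eq_zero_iff (n := 2) (by norm_num) |>.mp h2
      linarith [sub_eq_zero.mp this]
    have key : ∀ u v : V, h₀ u = h₀ v := by
      intro u v
      induction hconn u v with
      | refl => rfl
      | tail _ hstep ih => exact ih.trans (heq _ _ hstep)
    obtain ⟨u, v, huv⟩ := hnc
    exact huv (key u v)
  -- key pairing identity for i
  have hK : ∑ x : V, ∑ y : V, i x y * (h₀ y - h₀ x) = 2 * S * (h₀ z - h₀ a) := by
    rw [thomson_pairing i h₀ hi_anti]
    have := thomson_sum_two (fun x => h₀ x * ∑ y : V, i x y) a z haz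
      (fun x hx hz => by rw [hdiv_i x hx hz, mul_zero])
    rw [this, hSa, hSz]
    ring
  -- the unit current flow
  set θ₀ : V → V → ℝ := fun x y => i x y / S with hθ₀_def
  have hθ₀_anti : ∀ x y, θ₀ x y = - θ₀ y x := by
    intro x y; simp only [hθ₀_def]; rw [hi_anti]; ring
  have hθ₀_supp : ∀ x y, c x y = 0 → θ₀ x y = 0 := by
    intro x y hc; simp only [hθ₀_def, hi_def, hc, zero_mul, zero_div]
  have hθ₀_diva : ∑ y : V, θ₀ a y = 1 := by
    simp only [hθ₀_def]
    rw [← Finset.sum_div, hSa, div_self hS0]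
  have hθ₀_divz : ∑ y : V, θ₀ z y = -1 := by
    simp only [hθ₀_def]
    rw [← Finset.sum_div, hSz, neg_div, div_self hS0]
  have hθ₀_div : ∀ x, x ≠ a → x ≠ z → ∑ y : V, θ₀ x y = 0 := by
    intro x hx hz
    simp only [hθ₀_def]
    rw [← Finset.sum_div, hdiv_i x hx hz, zero_div]
  -- energy of θ₀
  have hE₀ : (1/2 : ℝ) * ∑ x : V, ∑ y : V, (1 / c x y) * θ₀ x y ^ 2
      = (h₀ z - h₀ a) / S := by
    have hpt : ∀ x y : V, (1 / c x y) * θ₀ x y ^ 2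
        = (1 / S^2) * (i x y * (h₀ y - h₀ x)) := by
      intro x y
      by_cases hc : c x y = 0
      · simp [hθ₀_def, hi_def, hc]
      · simp only [hθ₀_def, hi_def]
        field_simp
    simp only [hpt]
    simp_rw [← Finset.mul_sum]
    rw [hK]
    field_simp
  constructor
  · exact ⟨θ₀, hθ₀_anti, hθ₀_supp, hθ₀_div, hθ₀_diva, hE₀.symm⟩
  · rintro q ⟨θ, hanti, hsupp, hdiv, hone, rfl⟩
    set η : V → V → ℝ := fun x y => θ x y - θ₀ x y with hη_def
    have hη_anti : ∀ x y, η x y = - η y x := by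
      intro x y; simp only [hη_def]; rw [hanti, hθ₀_anti]; ring
    have hη_div : ∀ x, ∑ y : V, η x y = 0 := by
      intro x
      simp only [hη_def]
      rw [Finset.sum_sub_distrib]
      by_cases hxa : x = a
      · subst hxa; rw [hone, hθ₀_diva]; ring
      by_cases hxz : x = z
      · rw [hxz, thomson_div_z θ hanti a z haz hdiv, hone, hθ₀_divz]; ring
      · rw [hdiv x hxa hxz, hθ₀_div x hxa hxz]; ring
    have hcross : ∑ x : V, ∑ y : V, (1 / c x y) * (θ₀ x y * η x y) = 0 := by
      have hpt : ∀ x y : V, (1 / c x y) * (θ₀ x y * η x y)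
          = (1 / S) * (η x y * (h₀ y - h₀ x)) := by
        intro x y
        by_cases hc : c x y = 0
        · have hz1 : θ x y = 0 := hsupp x y hc
          have hz2 : θ₀ x y = 0 := hθ₀_supp x y hc
          have hz3 : η x y = 0 := by simp [hη_def, hz1, hz2]
          simp [hz3]
        · simp only [hθ₀_def, hi_def]
          field_simp
      simp only [hpt]
      simp_rw [← Finset.mul_sum]
      rw [thomson_pairing η h₀ hη_anti]
      simp [hη_div]
    have hexp : ∑ x : V, ∑ y : V, (1 / c x y) * θ x y ^ 2
        = (∑ x : V, ∑ y : V, (1 / c x y) * θ₀ x y ^ 2)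
          + 2 * (∑ x : V, ∑ y : V, (1 / c x y) * (θ₀ x y * η x y))
          + ∑ x : V, ∑ y : V, (1 / c x y) * η x y ^ 2 := by
      have hpt : ∀ x y : V, (1 / c x y) * θ x y ^ 2
          = (1 / c x y) * θ₀ x y ^ 2 + 2 * ((1 / c x y) * (θ₀ x y * η x y))
            + (1 / c x y) * η x y ^ 2 := by
        intro x y
        have : θ x y = θ₀ x y + η x y := by simp [hη_def]
        rw [this]; ring
      simp only [hpt, Finset.sum_add_distrib, ← Finset.mul_sum]
    have hnonneg : 0 ≤ ∑ x : V, ∑ y : V, (1 / c x y) * η x y ^ 2 :=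
      Finset.sum_nonneg fun x _ => Finset.sum_nonneg fun y _ =>
        mul_nonneg (one_div_nonneg.mpr (hnn x y)) (sq_nonneg _)
    calc (h₀ z - h₀ a) / S
        = (1/2 : ℝ) * ∑ x : V, ∑ y : V, (1 / c x y) * θ₀ x y ^ 2 := hE₀.symm
      _ ≤ (1/2 : ℝ) * ∑ x : V, ∑ y : V, (1 / c x y) * θ x y ^ 2 := by
          rw [hexp, hcross]
          linarith
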